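/- Let (X, B) be a standard κ-Borel space and let A ⊆ X. Then (A, B↾A) is a standard κ-Borel space if and only if A ∈ B. -/

import Mathlib

universe u v

open Cardinal Set

namespace GDST

/-- A *limit element* of an order: an element with some predecessor but
no immediate predecessor (i.e. it sits at a limit position). -/
def IsLimitElt {α : Type v} [LT α] (a : α) : Prop :=
  (∃ b, b < a) ∧ ∀ b, b < a → ∃ c, b < c ∧ c < a

/-- The space `X` has weight at most `κ`: it admits a topological basis of cardinality ≤ κ. -/
def HasWeightLE (κ : Cardinal.{u}) (X : Type u) [TopologicalSpace X] : Prop :=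
  ∃ B : Set (Set X), TopologicalSpace.IsTopologicalBasis B ∧ #B ≤ κ

/-- `X` is `κ`-additive: intersections of fewer than `κ` open sets are open. -/
def KAdditive (κ : Cardinal.{u}) (X : Type u) [TopologicalSpace X] : Prop :=
  ∀ S : Set (Set X), #S < κ → (∀ U ∈ S, IsOpen U) → IsOpen (⋂₀ S)

/-- `X` is `κ`-Lindelöf: every open cover has a subcover of size `< κ`. -/
def KLindelof (κ : Cardinal.{u}) (X : Type u) [TopologicalSpace X] : Prop :=
  ∀ 𝒰 : Set (Set X), (∀ U ∈ 𝒰, IsOpen U) → ⋃₀ 𝒰 = Set.univ →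
    ∃ 𝒱 ⊆ 𝒰, #𝒱 < κ ∧ ⋃₀ 𝒱 = Set.univ

/-- `X` is `κ`-perfect: no point `x` is `κ`-isolated, i.e. no `{x}` is an intersection
of fewer than `κ` open sets. -/
def KPerfect (κ : Cardinal.{u}) (X : Type u) [TopologicalSpace X] : Prop :=
  ∀ x : X, ¬ ∃ S : Set (Set X), #S < κ ∧ (∀ U ∈ S, IsOpen U) ∧ ⋂₀ S = {x}

/-- `A` is `G_δ^κ` in `X`: an intersection of `κ`-many open sets. -/
def IsGDeltaKappa (κ : Cardinal.{u}) {X : Type u} [TopologicalSpace X] (A : Set X) : Prop :=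
  ∃ U : κ.ord.ToType → Set X, (∀ i, IsOpen (U i)) ∧ A = ⋂ i, U i

/-! ### Generalized Baire and Cantor spaces -/

/-- The bounded topology on `ι → A`: generated by the sets of functions with a
prescribed restriction to a proper initial segment `{b | b < a}` of `ι`. -/
def BoundedTopology (ι : Type u) [LinearOrder ι] (A : Type v) : TopologicalSpace (ι → A) :=
  TopologicalSpace.generateFrom
    {U | ∃ (a : ι) (y : ι → A), U = {x : ι → A | ∀ b, b < a → x b = y b}}

/-- The generalized Baire space `κ^κ`. -/
def GenBaire (κ : Cardinal.{u}) : Type u := κ.ord.ToType → κ.ord.ToType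

noncomputable instance (κ : Cardinal.{u}) : TopologicalSpace (GenBaire κ) :=
  BoundedTopology κ.ord.ToType κ.ord.ToType

/-- The generalized Cantor space `2^κ`. -/
def GenCantor (κ : Cardinal.{u}) : Type u := κ.ord.ToType → Bool

noncomputable instance (κ : Cardinal.{u}) : TopologicalSpace (GenCantor κ) :=
  BoundedTopology κ.ord.ToType Bool

/-! ### The strong and fair (strong) κ-Choquet games -/

/-- A transfinite sequence of moves of player I: at each round a pair `(U, x)`. -/
abbrev IMoves (κ : Cardinal.{u}) (X : Type u) : Type u := κ.ord.ToType → Set X × X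

/-- A strategy for player II: given the moves of I (only the moves up to the current
round may be used, see `IsIIStrategy`) and the current round, produce II's move. -/
abbrev Strategy (κ : Cardinal.{u}) (X : Type u) : Type u := IMoves κ X → κ.ord.ToType → Set X

/-- The intersection of the sets played before round `a`. -/
def InterBelow {ι : Type u} {X : Type u} [LT ι] (V : ι → Set X) (a : ι) : Set X :=
  ⋂ b, ⋂ (_ : b < a), V b

/-- `U` is relatively open in `T`. -/
def RelOpenIn {X : Type u} [TopologicalSpace X] (T U : Set X) : Prop :=
  ∃ W : Set X, IsOpen W ∧ U = W ∩ T

/-- Player I's move at round `a` is legal: `(f a).1` is a nonempty relatively open subset of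
the intersection of all previously played sets, and the point `(f a).2` belongs to it. -/
def LegalI {κ : Cardinal.{u}} {X : Type u} [TopologicalSpace X]
    (σ : Strategy κ X) (f : IMoves κ X) (a : κ.ord.ToType) : Prop :=
  RelOpenIn (InterBelow (σ f) a) (f a).1 ∧ (f a).2 ∈ (f a).1

/-- Player II's answer (by `σ`) at round `a` is legal: it is relatively open in the
intersection of all previously played sets, contains I's point, and is contained in I's set. -/
def LegalII {κ : Cardinal.{u}} {X : Type u} [TopologicalSpace X]
    (σ : Strategy κ X) (f : IMoves κ X) (a : κ.ord.ToType) : Prop :=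
  RelOpenIn (InterBelow (σ f) a) (σ f a) ∧ (f a).2 ∈ σ f a ∧ σ f a ⊆ (f a).1

/-- All moves before round `a` were legal. -/
def LegalBelow {κ : Cardinal.{u}} {X : Type u} [TopologicalSpace X]
    (σ : Strategy κ X) (f : IMoves κ X) (a : κ.ord.ToType) : Prop :=
  ∀ b, b < a → LegalI σ f b ∧ LegalII σ f b

/-- `σ` only depends on the moves of I played so far. -/
def IsIIStrategy {κ : Cardinal.{u}} {X : Type u} (σ : Strategy κ X) : Prop :=
  ∀ f g : IMoves κ X, ∀ a, (∀ b, b ≤ a → f b = g b) → σ f a = σ g a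

/-- `σ` is a winning strategy for player II in the strong κ-Choquet game `G^s_κ(X)`:
it answers legally to legal positions, and in any (possibly partial) legal run the
intersection of the played sets at every limit round—including the final one—is nonempty. -/
def WinningStrong {κ : Cardinal.{u}} {X : Type u} [TopologicalSpace X]
    (σ : Strategy κ X) : Prop :=
  IsIIStrategy σ ∧
  (∀ f a, LegalBelow σ f a → LegalI σ f a → LegalII σ f a) ∧
  (∀ f a, IsLimitElt a → LegalBelow σ f a → (InterBelow (σ f) a).Nonempty) ∧
  (∀ f, (∀ a, LegalI σ f a ∧ LegalII σ f a) → (⋂ a, σ f a).Nonempty)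

/-- `σ` is a winning strategy for player II in the fair strong κ-Choquet game `fG^s_κ(X)`:
it answers legally to legal positions, and for every legal run either the intersection of
the played sets is empty at some limit round `< κ`, or the final intersection is nonempty. -/
def WinningFair {κ : Cardinal.{u}} {X : Type u} [TopologicalSpace X]
    (σ : Strategy κ X) : Prop :=
  IsIIStrategy σ ∧
  (∀ f a, LegalBelow σ f a → LegalI σ f a → LegalII σ f a) ∧
  (∀ f, (∀ a, LegalI σ f a ∧ LegalII σ f a) →
    (∃ a, IsLimitElt a ∧ InterBelow (σ f) a = ∅) ∨ (⋂ a, σ f a).Nonempty)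

/-- `X` is a strong κ-Choquet space. -/
def SCSpace (κ : Cardinal.{u}) (X : Type u) [TopologicalSpace X] : Prop :=
  HasWeightLE κ X ∧ ∃ σ : Strategy κ X, WinningStrong σ

/-- `X` is a strongly fair κ-Choquet space. -/
def fSCSpace (κ : Cardinal.{u}) (X : Type u) [TopologicalSpace X] : Prop :=
  HasWeightLE κ X ∧ ∃ σ : Strategy κ X, WinningFair σ

/-! ### Trees on κ -/

/-- Sequences of length `< κ` with values in `κ`, encoded as pairs `(a, x)` representing
the restriction of `x : κ → κ` to the initial segment `{b | b < a}`. -/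
abbrev TreeSeq (κ : Cardinal.{u}) : Type u := κ.ord.ToType × (κ.ord.ToType → κ.ord.ToType)

/-- `T` is a tree on `κ`: membership of `(a, x)` only depends on the restriction of `x`
below `a` (so that `T` really is a set of `<κ`-sequences), and `T` is closed under
initial segments. -/
def IsTreeOn (κ : Cardinal.{u}) (T : Set (TreeSeq κ)) : Prop :=
  (∀ a, ∀ x y : κ.ord.ToType → κ.ord.ToType,
      (∀ b, b < a → x b = y b) → ((a, x) ∈ T ↔ (a, y) ∈ T)) ∧
  (∀ a x, (a, x) ∈ T → ∀ b, b ≤ a → (b, x) ∈ T)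

/-- The body `[T]` of a tree `T` on `κ`. -/
def TreeBody (κ : Cardinal.{u}) (T : Set (TreeSeq κ)) : Set (GenBaire κ) :=
  {x | ∀ a, (a, x) ∈ T}

/-- `T` is pruned: every element has extensions in `T` of every length `< κ`. -/
def TreePruned (κ : Cardinal.{u}) (T : Set (TreeSeq κ)) : Prop :=
  ∀ a x, (a, x) ∈ T → ∀ c, a ≤ c → ∃ y, (∀ b, b < a → y b = x b) ∧ (c, y) ∈ T

/-- `T` is `<κ`-closed: a limit-length sequence all of whose proper initial segments
lie in `T` lies in `T`. -/
def TreeLtClosed (κ : Cardinal.{u}) (T : Set (TreeSeq κ)) : Prop :=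
  ∀ a, IsLimitElt a → ∀ x, (∀ b, b < a → (b, x) ∈ T) → (a, x) ∈ T

/-- `T` is superclosed: a pruned and `<κ`-closed tree. -/
def IsSuperclosedTree (κ : Cardinal.{u}) (T : Set (TreeSeq κ)) : Prop :=
  IsTreeOn κ T ∧ TreePruned κ T ∧ TreeLtClosed κ T

/-- A subset of the generalized Baire space is superclosed if it is the body of a
superclosed tree. -/
def IsSuperclosedSet (κ : Cardinal.{u}) (C : Set (GenBaire κ)) : Prop :=
  ∃ T : Set (TreeSeq κ), IsSuperclosedTree κ T ∧ C = TreeBody κ T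

/-- The `a`-th level of a tree `T` on `κ`. -/
def TreeLev (κ : Cardinal.{u}) (T : Set (TreeSeq κ)) (a : κ.ord.ToType) :
    Set ({b : κ.ord.ToType // b < a} → κ.ord.ToType) :=
  {s | ∃ x, (a, x) ∈ T ∧ ∀ b : {b : κ.ord.ToType // b < a}, x b.1 = s b}

/-- κ has the tree property: every tree on κ all of whose levels are nonempty of size `< κ`
has a (cofinal) branch. -/
def TreeProperty (κ : Cardinal.{u}) : Prop :=
  ∀ T : Set (TreeSeq κ), IsTreeOn κ T →
    (∀ a, (TreeLev κ T a).Nonempty ∧ #(TreeLev κ T a) < κ) →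
    ∃ x : κ.ord.ToType → κ.ord.ToType, ∀ a, (a, x) ∈ T

/-- κ is (strongly) inaccessible. -/
def Inaccessible (κ : Cardinal.{u}) : Prop :=
  ℵ₀ < κ ∧ κ.IsRegular ∧ ∀ μ : Cardinal.{u}, μ < κ → (2 : Cardinal.{u}) ^ μ < κ

/-- κ is weakly compact: inaccessible with the tree property. -/
def WeaklyCompact (κ : Cardinal.{u}) : Prop := Inaccessible κ ∧ TreeProperty κ

/-! ### κ-Borel sets -/

/-- The κ-Borel subsets of a topological space: the smallest family containing the open
sets and closed under complements and unions of at most κ-many sets. -/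
inductive KBorel (κ : Cardinal.{u}) {X : Type u} [TopologicalSpace X] : Set X → Prop
  | of_isOpen (U : Set X) : IsOpen U → KBorel κ U
  | compl (S : Set X) : KBorel κ S → KBorel κ Sᶜ
  | iUnion (ι : Type u) (f : ι → Set X) : #ι ≤ κ → (∀ i, KBorel κ (f i)) → KBorel κ (⋃ i, f i)

/-! ### 𝔾-metric spaces -/

section GMetric

variable (G : Type u) [AddCommGroup G] [LinearOrder G] [IsOrderedAddMonoid G]

/-- The positive cone of `G` has coinitiality `κ`: there is a coinitial set of positive
elements of size `≤ κ`, and no such set of size `< κ`. -/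
def HasDegree (κ : Cardinal.{u}) : Prop :=
  (∃ S : Set G, (∀ ε ∈ S, 0 < ε) ∧ (∀ δ : G, 0 < δ → ∃ ε ∈ S, ε ≤ δ) ∧ #S ≤ κ) ∧
  (∀ S : Set G, (∀ ε ∈ S, 0 < ε) → (∀ δ : G, 0 < δ → ∃ ε ∈ S, ε ≤ δ) → κ ≤ #S)

variable {G}

/-- `d` is a `𝔾`-metric on `X`. -/
structure IsGMetric {X : Type u} (d : X → X → G) : Prop where
  nonneg : ∀ x y, 0 ≤ d x y
  eq_zero_iff : ∀ x y, d x y = 0 ↔ x = y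
  symm : ∀ x y, d x y = d y x
  triangle : ∀ x y z, d x z ≤ d x y + d y z

/-- The open ball of center `x` and radius `ε`. -/
def GBall {X : Type u} (d : X → X → G) (x : X) (ε : G) : Set X := {y | d x y < ε}

/-- The topology induced by a `𝔾`-metric. -/
def GMetricTopology {X : Type u} (d : X → X → G) : TopologicalSpace X :=
  TopologicalSpace.generateFrom {U | ∃ x ε, 0 < ε ∧ U = GBall d x ε}

/-- The `𝔾`-metric `d` is compatible with the topology of `X`. -/
def GCompatible {X : Type u} [t : TopologicalSpace X] (d : X → X → G) : Prop :=
  GMetricTopology d = t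

/-- A `κ`-sequence is `d`-Cauchy. -/
def GCauchy (κ : Cardinal.{u}) {X : Type u} (d : X → X → G) (x : κ.ord.ToType → X) : Prop :=
  ∀ ε : G, 0 < ε → ∃ a, ∀ b, a ≤ b → ∀ c, a ≤ c → d (x b) (x c) < ε

/-- A `κ`-sequence `d`-converges to `y`. -/
def GConvergesTo (κ : Cardinal.{u}) {X : Type u} (d : X → X → G)
    (x : κ.ord.ToType → X) (y : X) : Prop :=
  ∀ ε : G, 0 < ε → ∃ a, ∀ b, a ≤ b → d (x b) y < ε

/-- `d` is Cauchy-complete: every `d`-Cauchy `κ`-sequence converges. -/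
def GCauchyComplete (κ : Cardinal.{u}) {X : Type u} (d : X → X → G) : Prop :=
  ∀ x : κ.ord.ToType → X, GCauchy κ d x → ∃ y, GConvergesTo κ d x y

/-- `X` is `𝔾`-metrizable: it admits a compatible `𝔾`-metric. -/
def GMetrizable (G : Type u) [AddCommGroup G] [LinearOrder G] [IsOrderedAddMonoid G]
    (X : Type u) [TopologicalSpace X] : Prop :=
  ∃ d : X → X → G, IsGMetric d ∧ GCompatible d

/-- `X` is `𝔾`-Polish: it has weight `≤ κ` and admits a compatible Cauchy-complete
`𝔾`-metric. -/
def GPolish (G : Type u) [AddCommGroup G] [LinearOrder G] [IsOrderedAddMonoid G] (κ : Cardinal.{u})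
    (X : Type u) [TopologicalSpace X] : Prop :=
  HasWeightLE κ X ∧ ∃ d : X → X → G, IsGMetric d ∧ GCompatible d ∧ GCauchyComplete κ d

/-- `d` is spherically complete: every (nonempty) ⊆-decreasing transfinite sequence of open
`d`-balls has nonempty intersection. -/
def SphericallyComplete {X : Type u} (d : X → X → G) : Prop :=
  ∀ o : Ordinal.{u}, o ≠ 0 → ∀ c : o.ToType → Set X,
    (∀ i, ∃ x ε, 0 < ε ∧ c i = GBall d x ε) →
    (∀ i j, i ≤ j → c j ⊆ c i) → (⋂ i, c i).Nonempty

/-- `d` is spherically `<κ`-complete: every (nonempty) ⊆-decreasing sequence of open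
`d`-balls of length `< κ` has nonempty intersection. -/
def SphericallyLtComplete (κ : Cardinal.{u}) {X : Type u} (d : X → X → G) : Prop :=
  ∀ o : Ordinal.{u}, o ≠ 0 → o < κ.ord → ∀ c : o.ToType → Set X,
    (∀ i, ∃ x ε, 0 < ε ∧ c i = GBall d x ε) →
    (∀ i j, i ≤ j → c j ⊆ c i) → (⋂ i, c i).Nonempty

/-- `X` is a spherically complete `𝔾`-Polish space. -/
def GPolishSphericallyComplete (G : Type u) [AddCommGroup G] [LinearOrder G] [IsOrderedAddMonoid G] (κ : Cardinal.{u})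
    (X : Type u) [TopologicalSpace X] : Prop :=
  HasWeightLE κ X ∧
    ∃ d : X → X → G, IsGMetric d ∧ GCompatible d ∧ GCauchyComplete κ d ∧ SphericallyComplete d

/-- `X` is a spherically `<κ`-complete `𝔾`-Polish space. -/
def GPolishSphericallyLtComplete (G : Type u) [AddCommGroup G] [LinearOrder G] [IsOrderedAddMonoid G] (κ : Cardinal.{u})
    (X : Type u) [TopologicalSpace X] : Prop :=
  HasWeightLE κ X ∧
    ∃ d : X → X → G, IsGMetric d ∧ GCompatible d ∧ GCauchyComplete κ d ∧
      SphericallyLtComplete κ d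

end GMetric

/-! ### κ-Borel spaces -/

/-- `ℬ` is a `κ⁺`-algebra on `X`: closed under complements and unions of at most
κ-many sets. -/
def IsKplusAlgebra (κ : Cardinal.{u}) {X : Type u} (ℬ : Set (Set X)) : Prop :=
  (∀ S ∈ ℬ, Sᶜ ∈ ℬ) ∧
  (∀ (ι : Type u) (f : ι → Set X), #ι ≤ κ → (∀ i, f i ∈ ℬ) → (⋃ i, f i) ∈ ℬ)

/-- `ℬ` separates the points of `X`. -/
def SepPoints {X : Type u} (ℬ : Set (Set X)) : Prop :=
  ∀ x y : X, x ≠ y → ∃ S ∈ ℬ, x ∈ S ∧ y ∉ S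

/-- `(X, ℬ)` is a κ-Borel space: a `κ⁺`-algebra that separates points and is generated
(as a `κ⁺`-algebra) by a subfamily of size `≤ κ`. -/
def IsKBorelSpace (κ : Cardinal.{u}) {X : Type u} (ℬ : Set (Set X)) : Prop :=
  IsKplusAlgebra κ ℬ ∧ SepPoints ℬ ∧
    ∃ 𝒢 ⊆ ℬ, #𝒢 ≤ κ ∧
      ∀ ℬ' : Set (Set X), IsKplusAlgebra κ ℬ' → 𝒢 ⊆ ℬ' → ℬ ⊆ ℬ'

/-- The restriction `ℬ↾A` of a family of subsets of `X` to `A ⊆ X`. -/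
def RestrictFam {X : Type u} (ℬ : Set (Set X)) (A : Set X) : Set (Set ↥A) :=
  {T | ∃ S ∈ ℬ, T = Subtype.val ⁻¹' S}

/-- The family of κ-Borel sets of a topological space. -/
def KBorelFam (κ : Cardinal.{u}) (X : Type u) [TopologicalSpace X] : Set (Set X) :=
  {S | KBorel κ S}

/-- `e` is a κ-Borel isomorphism between `(X, ℬ)` and `(Y, 𝒞)`: a bijection under which
images and preimages of distinguished sets are distinguished. -/
def IsKBorelSpaceIso {X Y : Type u} (ℬ : Set (Set X)) (𝒞 : Set (Set Y)) (e : X ≃ Y) : Prop :=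
  (∀ S ∈ ℬ, e '' S ∈ 𝒞) ∧ (∀ S ∈ 𝒞, e ⁻¹' S ∈ ℬ)

/-- `(X, ℬ)` is a standard κ-Borel space: it is a κ-Borel space which is κ-Borel isomorphic
to a κ-Borel subset of the generalized Baire space (with the restricted κ-Borel structure). -/
def IsStandardKBorel (κ : Cardinal.{u}) {X : Type u} (ℬ : Set (Set X)) : Prop :=
  IsKBorelSpace κ ℬ ∧
    ∃ B₀ : Set (GenBaire κ), KBorel κ B₀ ∧
      ∃ e : X ≃ ↥B₀, IsKBorelSpaceIso ℬ (RestrictFam (KBorelFam κ (GenBaire κ)) B₀) e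


/-! ### Auxiliary development for Statement 19 -/

section Stmt19Aux

open TopologicalSpace

variable {κ : Cardinal.{u}}

lemma mk_ordToType (κ : Cardinal.{u}) : #κ.ord.ToType = κ := by
  rw [Cardinal.mk_toType, Cardinal.card_ord]

lemma nonempty_ordToType (hκ : κ ≠ 0) : Nonempty κ.ord.ToType := by
  rw [← Cardinal.mk_ne_zero_iff, mk_ordToType]; exact hκ

lemma exists_bound (hreg : κ.IsRegular) (hunc : ℵ₀ < κ) {M : Type u} (hM : #M < κ)
    (f : M → κ.ord.ToType) : ∃ a, ∀ i, f i < a := by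
  haveI : IsWellOrder κ.ord.ToType (· < ·) := isWellOrder_lt
  set o := ⨆ i, Ordinal.typein (α := κ.ord.ToType) (· < ·) (f i) with ho
  have h1 : o < κ.ord := by
    apply Ordinal.iSup_lt_ord
    · rwa [hreg.cof_eq]
    · exact fun i => Ordinal.typein_lt_self _
  have h2 : o + 1 < κ.ord := by
    rw [Ordinal.add_one_eq_succ]
    exact (Cardinal.isSuccLimit_ord hunc.le).succ_lt h1
  refine ⟨Ordinal.enum (α := κ.ord.ToType) (· < ·) ⟨o + 1, Set.mem_Iio.mpr (by rwa [Ordinal.type_toType])⟩,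
    fun i => ?_⟩
  have hlt : Ordinal.typein (α := κ.ord.ToType) (· < ·) (f i) < o + 1 :=
    lt_of_le_of_lt (Ordinal.le_iSup _ i) (lt_add_one o)
  apply (Ordinal.typein_lt_typein ((· < ·) : κ.ord.ToType → κ.ord.ToType → Prop)).1
  convert hlt using 2
  exact Ordinal.typein_enum _ _

lemma exists_gt (hreg : κ.IsRegular) (hunc : ℵ₀ < κ) (b : κ.ord.ToType) : ∃ a, b < a := by
  have h1 : #PUnit.{u+1} < κ := by
    rw [Cardinal.mk_punit]
    exact lt_of_lt_of_le Cardinal.one_lt_aleph0 hunc.le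
  obtain ⟨a, ha⟩ := exists_bound hreg hunc h1 (fun _ => b)
  exact ⟨a, ha PUnit.unit⟩

lemma mk_fun_le (hreg : κ.IsRegular) (hunc : ℵ₀ < κ) (hpow : (2 : Cardinal.{u}) ^< κ = κ)
    {M : Type u} (hM : #M < κ) : #(M → κ.ord.ToType) ≤ κ := by
  have hrec : ∀ p : Σ a : κ.ord.ToType, (M → ↥(Iio a)), True := fun _ => trivial
  -- injection into the sigma type of bounded functions
  have hinj : ∃ F : (M → κ.ord.ToType) → Σ a : κ.ord.ToType, (M → ↥(Iio a)),
      Function.Injective F := by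
    refine ⟨fun f => ⟨Classical.choose (exists_bound hreg hunc hM f),
      fun i => ⟨f i, Classical.choose_spec (exists_bound hreg hunc hM f) i⟩⟩, ?_⟩
    have hrecov : ∀ f, (fun i => ((fun i => (⟨f i, Classical.choose_spec
        (exists_bound hreg hunc hM f) i⟩ : ↥(Iio (Classical.choose
        (exists_bound hreg hunc hM f))))) i).1) = f := fun f => rfl
    intro f g hfg
    funext i
    have := congrArg (fun p : (Σ a : κ.ord.ToType, (M → ↥(Iio a))) => ((p.2 i : ↥(Iio p.1)) : κ.ord.ToType)) hfg
    exact this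
  obtain ⟨F, hF⟩ := hinj
  have h1 : #(M → κ.ord.ToType) ≤ #(Σ a : κ.ord.ToType, (M → ↥(Iio a))) :=
    Cardinal.mk_le_of_injective hF
  refine h1.trans ?_
  rw [Cardinal.mk_sigma]
  have h2 : ∀ a : κ.ord.ToType, #(M → ↥(Iio a)) ≤ κ := by
    intro a
    have h3 : #(M → ↥(Iio a)) = #(↥(Iio a)) ^ #M := (Cardinal.power_def _ _).symm
    rw [h3]
    have h4 : #(↥(Iio a)) ^ #M ≤ ((2:Cardinal.{u}) ^ #(↥(Iio a))) ^ #M :=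
      Cardinal.power_le_power_right (Cardinal.cantor _).le
    have h5 : ((2:Cardinal.{u}) ^ #(↥(Iio a))) ^ #M = 2 ^ (#(↥(Iio a)) * #M) := (Cardinal.power_mul).symm
    have h6 : #(↥(Iio a)) * #M < κ :=
      Cardinal.mul_lt_of_lt hunc.le (Cardinal.mk_Iio_ord_toType a) hM
    have h7 : (2 : Cardinal.{u}) ^ (#(↥(Iio a)) * #M) ≤ 2 ^< κ := Cardinal.le_powerlt 2 h6
    rw [hpow] at h7
    exact h4.trans (h5 ▸ h7)
  calc (Cardinal.sum fun a : κ.ord.ToType => #(M → ↥(Iio a)))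
      ≤ Cardinal.sum (fun _ : κ.ord.ToType => κ) := Cardinal.sum_le_sum _ _ h2
    _ = #κ.ord.ToType * κ := Cardinal.sum_const' _ _
    _ = κ * κ := by rw [mk_ordToType]
    _ = κ := Cardinal.mul_eq_self hunc.le

/-- The type of initial segments: a length `a` together with a function on `{b | b < a}`. -/
def Sg (κ : Cardinal.{u}) : Type u :=
  Σ a : κ.ord.ToType, (↥(Iio a) → κ.ord.ToType)

lemma mk_Sg_le (hreg : κ.IsRegular) (hunc : ℵ₀ < κ) (hpow : (2 : Cardinal.{u}) ^< κ = κ) :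
    #(Sg κ) ≤ κ := by
  rw [Sg, Cardinal.mk_sigma]
  calc (Cardinal.sum fun a : κ.ord.ToType => #(↥(Iio a) → κ.ord.ToType))
      ≤ Cardinal.sum (fun _ : κ.ord.ToType => κ) :=
        Cardinal.sum_le_sum _ _ (fun a => mk_fun_le hreg hunc hpow (Cardinal.mk_Iio_ord_toType a))
    _ = #κ.ord.ToType * κ := Cardinal.sum_const' _ _
    _ = κ * κ := by rw [mk_ordToType]
    _ = κ := Cardinal.mul_eq_self hunc.le

end Stmt19Aux

section Stmt19Top

open TopologicalSpace

variable {κ : Cardinal.{u}}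

/-- The basic set determined by an initial segment. -/
def Nseg (κ : Cardinal.{u}) (a : κ.ord.ToType) (t : ↥(Iio a) → κ.ord.ToType) :
    Set (GenBaire κ) :=
  {x | ∀ b (h : b < a), x b = t ⟨b, h⟩}

/-- The generating family of the bounded topology on the generalized Baire space. -/
def BGens (κ : Cardinal.{u}) : Set (Set (GenBaire κ)) :=
  {U | ∃ (a : κ.ord.ToType) (y : κ.ord.ToType → κ.ord.ToType),
    U = {x : κ.ord.ToType → κ.ord.ToType | ∀ b, b < a → x b = y b}}

lemma isOpen_iff_generateOpen {S : Set (GenBaire κ)} :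
    IsOpen S ↔ GenerateOpen (BGens κ) S := Iff.rfl

lemma Nseg_mem_BGens (a : κ.ord.ToType) (t : ↥(Iio a) → κ.ord.ToType) :
    Nseg κ a t ∈ BGens κ := by
  refine ⟨a, fun b => if h : b < a then t ⟨b, h⟩ else b, ?_⟩
  ext x
  constructor
  · intro hx b hb
    show x b = if h : b < a then t ⟨b, h⟩ else b
    rw [dif_pos hb]
    exact hx b hb
  · intro hx b hb
    have : x b = if h : b < a then t ⟨b, h⟩ else b := hx b hb
    rwa [dif_pos hb] at this

lemma isOpen_Nseg (a : κ.ord.ToType) (t : ↥(Iio a) → κ.ord.ToType) :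
    IsOpen (Nseg κ a t) :=
  isOpen_iff_generateOpen.2 (GenerateOpen.basic _ (Nseg_mem_BGens a t))

lemma kb_Nseg (a : κ.ord.ToType) (t : ↥(Iio a) → κ.ord.ToType) :
    KBorel κ (Nseg κ a t) :=
  KBorel.of_isOpen _ (isOpen_Nseg a t)

variable {X : Type u} [TopologicalSpace X]

lemma kb_iUnion {ι' : Type u} (hι : #ι' ≤ κ) {f : ι' → Set X} (hf : ∀ i, KBorel κ (f i)) :
    KBorel κ (⋃ i, f i) :=
  KBorel.iUnion ι' f hι hf

lemma kb_iInter {ι' : Type u} (hι : #ι' ≤ κ) {f : ι' → Set X} (hf : ∀ i, KBorel κ (f i)) :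
    KBorel κ (⋂ i, f i) := by
  have h : (⋂ i, f i) = (⋃ i, (f i)ᶜ)ᶜ := by
    ext z; simp
  rw [h]
  exact KBorel.compl _ (kb_iUnion hι (fun i => KBorel.compl _ (hf i)))

lemma mk_ulift_bool_le (hunc : ℵ₀ < κ) : #(ULift.{u} Bool) ≤ κ :=
  le_trans (Cardinal.mk_le_aleph0) hunc.le

lemma kb_union (hunc : ℵ₀ < κ) {S T : Set X} (hS : KBorel κ S) (hT : KBorel κ T) :
    KBorel κ (S ∪ T) := by
  have h : S ∪ T = ⋃ i : ULift.{u} Bool, (if i.down then S else T) := by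
    ext z
    simp only [Set.mem_union, Set.mem_iUnion]
    constructor
    · rintro (hz | hz)
      exacts [⟨⟨true⟩, by simpa⟩, ⟨⟨false⟩, by simpa⟩]
    · rintro ⟨⟨b⟩, hz⟩
      cases b
      · right; simpa using hz
      · left; simpa using hz
  rw [h]
  exact kb_iUnion (mk_ulift_bool_le hunc) (fun i => by split <;> assumption)

lemma kb_inter (hunc : ℵ₀ < κ) {S T : Set X} (hS : KBorel κ S) (hT : KBorel κ T) :
    KBorel κ (S ∩ T) := by
  have h : S ∩ T = (Sᶜ ∪ Tᶜ)ᶜ := by rw [Set.compl_union, compl_compl, compl_compl]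
  rw [h]
  exact KBorel.compl _ (kb_union hunc (KBorel.compl _ hS) (KBorel.compl _ hT))

/-- Basis property: every open set of the generalized Baire space contains a basic set
around each of its points. -/
lemma basisP (hκ : κ ≠ 0) {S : Set (GenBaire κ)} (hS : IsOpen S) :
    ∀ z ∈ S, ∃ p : Sg κ, z ∈ Nseg κ p.1 p.2 ∧ Nseg κ p.1 p.2 ⊆ S := by
  have h : GenerateOpen (BGens κ) S := isOpen_iff_generateOpen.1 hS
  clear hS
  induction h with
  | basic U hU =>
    obtain ⟨a, y, rfl⟩ := hU
    intro z hz
    refine ⟨⟨a, fun b => y b.1⟩, fun b hb => hz b hb, fun x hx b hb => ?_⟩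
    have h1 := hx b hb
    have h2 := hz b hb
    exact h1.trans (by rfl)
  | univ =>
    intro z _
    obtain ⟨a⟩ := nonempty_ordToType hκ
    exact ⟨⟨a, fun b => z b.1⟩, fun b hb => rfl, fun x _ => trivial⟩
  | inter S T hSg hTg ihS ihT =>
    intro z hz
    obtain ⟨p₁, hz₁, hsub₁⟩ := ihS z hz.1
    obtain ⟨p₂, hz₂, hsub₂⟩ := ihT z hz.2
    refine ⟨⟨max p₁.1 p₂.1, fun b => z b.1⟩, fun b hb => rfl, fun x hx => ?_⟩
    constructor
    · apply hsub₁
      intro b hb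
      have hbm : b < max p₁.1 p₂.1 := lt_of_lt_of_le hb (le_max_left _ _)
      exact (hx b hbm).trans (hz₁ b hb)
    · apply hsub₂
      intro b hb
      have hbm : b < max p₁.1 p₂.1 := lt_of_lt_of_le hb (le_max_right _ _)
      exact (hx b hbm).trans (hz₂ b hb)
  | sUnion 𝒮 hmem ih =>
    intro z hz
    obtain ⟨S', hS', hz'⟩ := hz
    obtain ⟨p, h1, h2⟩ := ih S' hS' z hz'
    exact ⟨p, h1, h2.trans (Set.subset_sUnion_of_mem hS')⟩

end Stmt19Top

section Stmt19Restrict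

variable {κ : Cardinal.{u}} {X : Type u}

lemma restrictFam_isKplusAlgebra {ℬ : Set (Set X)} (halg : IsKplusAlgebra κ ℬ) (A : Set X) :
    IsKplusAlgebra κ (RestrictFam ℬ A) := by
  constructor
  · rintro T ⟨S, hS, rfl⟩
    exact ⟨Sᶜ, halg.1 S hS, by rw [Set.preimage_compl]⟩
  · intro ι' f hι hf
    choose S hS hfeq using hf
    refine ⟨⋃ i, S i, halg.2 ι' S hι hS, ?_⟩
    rw [Set.preimage_iUnion]
    exact Set.iUnion_congr hfeq

lemma restrictFam_isKBorelSpace {ℬ : Set (Set X)} (hKB : IsKBorelSpace κ ℬ) (A : Set X) :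
    IsKBorelSpace κ (RestrictFam ℬ A) := by
  obtain ⟨halg, hsep, 𝒢₀, h𝒢₀, hcard, hgen⟩ := hKB
  refine ⟨restrictFam_isKplusAlgebra halg A, ?_, ?_⟩
  · intro x y hxy
    obtain ⟨S, hS, hx, hy⟩ := hsep x.1 y.1 (fun h => hxy (Subtype.ext h))
    exact ⟨Subtype.val ⁻¹' S, ⟨S, hS, rfl⟩, hx, hy⟩
  · refine ⟨(fun S => (Subtype.val ⁻¹' S : Set ↥A)) '' 𝒢₀, ?_, ?_, ?_⟩
    · rintro T ⟨S, hS, rfl⟩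
      exact ⟨S, h𝒢₀ hS, rfl⟩
    · exact le_trans Cardinal.mk_image_le hcard
    · intro ℬ' halg' hsub'
      rintro T ⟨S, hS, rfl⟩
      have hD : IsKplusAlgebra κ {S : Set X | (Subtype.val ⁻¹' S : Set ↥A) ∈ ℬ'} := by
        constructor
        · intro S' hS'
          have : (Subtype.val ⁻¹' S'ᶜ : Set ↥A) = (Subtype.val ⁻¹' S')ᶜ := by
            rw [Set.preimage_compl]
          exact Set.mem_setOf_eq ▸ (this ▸ halg'.1 _ hS')
        · intro ι' f hι hf
          have : (Subtype.val ⁻¹' ⋃ i, f i : Set ↥A) = ⋃ i, Subtype.val ⁻¹' (f i) :=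
            Set.preimage_iUnion
          exact Set.mem_setOf_eq ▸ (this ▸ halg'.2 ι' _ hι hf)
      have h𝒢₀D : 𝒢₀ ⊆ {S : Set X | (Subtype.val ⁻¹' S : Set ↥A) ∈ ℬ'} := by
        intro S' hS'
        exact hsub' ⟨S', hS', rfl⟩
      exact hgen _ hD h𝒢₀D hS

/-- Easy direction of Statement 19. -/
lemma stmt19_easy {κ : Cardinal.{u}} (hunc : ℵ₀ < κ) {X : Type u} {ℬ : Set (Set X)}
    (hstd : IsStandardKBorel κ ℬ) {A : Set X} (hA : A ∈ ℬ) :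
    IsStandardKBorel κ (RestrictFam ℬ A) := by
  obtain ⟨hKB, B₀, hB₀, e, he⟩ := hstd
  refine ⟨restrictFam_isKBorelSpace hKB A, ?_⟩
  obtain ⟨S_A, hS_A, hEq⟩ := he.1 A hA
  -- hEq : e '' A = Subtype.val ⁻¹' S_A
  refine ⟨S_A ∩ B₀, kb_inter hunc hS_A hB₀, ?_⟩
  have hmem : ∀ a : X, a ∈ A → (e a).1 ∈ S_A ∩ B₀ := by
    intro a ha
    refine ⟨?_, (e a).2⟩
    have : e a ∈ e '' A := Set.mem_image_of_mem e ha
    rw [hEq] at this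
    exact this
  have hmem' : ∀ b : ↥B₀, b.1 ∈ S_A → e.symm b ∈ A := by
    intro b hb
    have : b ∈ e '' A := by rw [hEq]; exact hb
    obtain ⟨a, ha, rfl⟩ := this
    rwa [Equiv.symm_apply_apply]
  refine ⟨⟨fun a => ⟨(e a.1).1, hmem a.1 a.2⟩, fun x => ⟨e.symm ⟨x.1, x.2.2⟩, hmem' _ x.2.1⟩,
    fun a => ?_, fun x => ?_⟩, ?_, ?_⟩
  · apply Subtype.ext
    show (e.symm ⟨(e a.1).1, (e a.1).2⟩ : X) = a.1
    have : (⟨(e a.1).1, (e a.1).2⟩ : ↥B₀) = e a.1 := rfl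
    rw [this, Equiv.symm_apply_apply]
  · apply Subtype.ext
    show (e (e.symm ⟨x.1, x.2.2⟩)).1 = x.1
    rw [Equiv.apply_symm_apply]
  · -- images of restricted sets are restricted Borel
    rintro T ⟨S', hS', rfl⟩
    obtain ⟨W, hW, hWEq⟩ := he.1 S' hS'
    rw [Equiv.image_eq_preimage_symm] at hWEq
    refine ⟨W, hW, ?_⟩
    rw [Equiv.image_eq_preimage_symm]
    ext x
    show (e.symm ⟨x.1, x.2.2⟩ : X) ∈ S' ↔ x.1 ∈ W
    exact Set.ext_iff.mp hWEq ⟨x.1, x.2.2⟩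
  · -- preimages of restricted Borel sets are restricted
    rintro T ⟨S, hS, rfl⟩
    refine ⟨e ⁻¹' (Subtype.val ⁻¹' S), he.2 _ ⟨S, hS, rfl⟩, rfl⟩

end Stmt19Restrict

section Stmt19Hard

/-- Hard direction of Statement 19. -/
lemma stmt19_hard {κ : Cardinal.{u}} (hreg : κ.IsRegular) (hunc : ℵ₀ < κ)
    (hpow : (2 : Cardinal.{u}) ^< κ = κ) {X : Type u} {ℬ : Set (Set X)}
    (hstd : IsStandardKBorel κ ℬ) {A : Set X}
    (hsub : IsStandardKBorel κ (RestrictFam ℬ A)) : A ∈ ℬ := by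
  classical
  obtain ⟨hKB, B₀, hB₀, e, he⟩ := hstd
  obtain ⟨hKB₁, B₁, hB₁, e₁, he₁⟩ := hsub
  have hκ0 : κ ≠ 0 := hreg.pos.ne'
  have hfun_le : ∀ a : κ.ord.ToType, #(↥(Iio a) → κ.ord.ToType) ≤ κ :=
    fun a => mk_fun_le hreg hunc hpow (Cardinal.mk_Iio_ord_toType a)
  set H : ↥B₁ → GenBaire κ := fun x => (e ((e₁.symm x : ↥A) : X)).1 with hHdef
  have hHinj : Function.Injective H := by
    intro x x' hxx
    have h1 : e ((e₁.symm x : ↥A) : X) = e ((e₁.symm x' : ↥A) : X) := Subtype.ext hxx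
    have h2 : ((e₁.symm x : ↥A) : X) = ((e₁.symm x' : ↥A) : X) := e.injective h1
    exact e₁.symm.injective (Subtype.ext h2)
  -- the U family: H-preimages of basic sets, as Borel sets
  have hU : ∀ (a : κ.ord.ToType) (t : ↥(Iio a) → κ.ord.ToType),
      ∃ U : Set (GenBaire κ), KBorel κ U ∧ ∀ x : ↥B₁, (H x ∈ Nseg κ a t ↔ x.1 ∈ U) := by
    intro a t
    have h1 : (Subtype.val ⁻¹' (Nseg κ a t) : Set ↥B₀) ∈
        RestrictFam (KBorelFam κ (GenBaire κ)) B₀ := ⟨_, kb_Nseg a t, rfl⟩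
    have h2 := he.2 _ h1
    have h3 : (Subtype.val ⁻¹' (e ⁻¹' (Subtype.val ⁻¹' (Nseg κ a t))) : Set ↥A) ∈
        RestrictFam ℬ A := ⟨_, h2, rfl⟩
    obtain ⟨U, hUb, hEq⟩ := he₁.1 _ h3
    rw [Equiv.image_eq_preimage_symm] at hEq
    exact ⟨U, hUb, fun x => Set.ext_iff.mp hEq x⟩
  choose U hUb hUx using hU
  -- the V family: H-images of basic sets, as traces of Borel sets on the range of H
  have hV : ∀ (a : κ.ord.ToType) (t : ↥(Iio a) → κ.ord.ToType),
      ∃ V : Set (GenBaire κ), KBorel κ V ∧ ∀ y : GenBaire κ,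
        ((y ∈ V ∧ ∃ x : ↥B₁, H x = y) ↔ ∃ x : ↥B₁, x.1 ∈ Nseg κ a t ∧ H x = y) := by
    intro a t
    have h1 : (Subtype.val ⁻¹' (Nseg κ a t) : Set ↥B₁) ∈
        RestrictFam (KBorelFam κ (GenBaire κ)) B₁ := ⟨_, kb_Nseg a t, rfl⟩
    obtain ⟨S', hS', hEq₁⟩ := he₁.2 _ h1
    obtain ⟨W, hW, hEq₂⟩ := he.1 S' hS'
    rw [Equiv.image_eq_preimage_symm] at hEq₂
    refine ⟨W ∩ B₀, kb_inter hunc hW hB₀, fun y => ?_⟩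
    constructor
    · rintro ⟨⟨hyW, hyB₀⟩, x, rfl⟩
      refine ⟨x, ?_, rfl⟩
      have h2 : e ((e₁.symm x : ↥A) : X) ∈ Subtype.val ⁻¹' W := hyW
      rw [← hEq₂] at h2
      have h3 : ((e₁.symm x : ↥A) : X) ∈ S' := by
        rw [Set.mem_preimage, Equiv.symm_apply_apply] at h2
        exact h2
      have h4 : e₁.symm x ∈ Subtype.val ⁻¹' S' := h3
      rw [← hEq₁] at h4
      rw [Set.mem_preimage, Equiv.apply_symm_apply] at h4
      exact h4
    · rintro ⟨x, hxN, rfl⟩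
      refine ⟨⟨?_, (e ((e₁.symm x : ↥A) : X)).2⟩, x, rfl⟩
      have h4 : e₁.symm x ∈ e₁ ⁻¹' (Subtype.val ⁻¹' (Nseg κ a t)) := by
        rw [Set.mem_preimage, Equiv.apply_symm_apply]
        exact hxN
      rw [hEq₁] at h4
      have h6 : ((e₁.symm x : ↥A) : X) ∈ S' := h4
      have h7 : e ((e₁.symm x : ↥A) : X) ∈ e.symm ⁻¹' S' := by
        rw [Set.mem_preimage, Equiv.symm_apply_apply]
        exact h6
      rw [hEq₂] at h7
      exact h7
  choose V hVb hVy using hV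
  -- choose for every index an index strictly above it
  choose a₀ ha₀lt using exists_gt hreg hunc
  -- the set of points whose "traces" through the V-family are uniquely determined
  set G₀ : Set (GenBaire κ) := {y | ∀ a, ∃! t : ↥(Iio a) → κ.ord.ToType, y ∈ V a t}
    with hG₀def
  have hG₀b : KBorel κ G₀ := by
    have hEq : G₀ = ⋂ a, ⋃ t : ↥(Iio a) → κ.ord.ToType,
        (V a t ∩ ⋂ t' : {t' : ↥(Iio a) → κ.ord.ToType // t' ≠ t}, (V a t'.1)ᶜ) := by
      ext y
      simp only [hG₀def, Set.mem_setOf_eq, Set.mem_iInter, Set.mem_iUnion, Set.mem_inter_iff,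
        Set.mem_compl_iff]
      constructor
      · intro hy a
        obtain ⟨t, ht, hun⟩ := hy a
        exact ⟨t, ht, fun t' hmem => t'.2 (hun t'.1 hmem)⟩
      · intro hy a
        obtain ⟨t, ht, hn⟩ := hy a
        exact ⟨t, ht, fun t' ht' => by_contra fun hne => hn ⟨t', hne⟩ ht'⟩
    rw [hEq]
    exact kb_iInter (mk_ordToType κ).le fun a => kb_iUnion (hfun_le a) fun t =>
      kb_inter hunc (hVb a t)
        (kb_iInter ((Cardinal.mk_subtype_le _).trans (hfun_le a)) fun t' =>
          KBorel.compl _ (hVb a t'.1))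
  -- the candidate-inverse map
  set xc : GenBaire κ → GenBaire κ := fun y b =>
    if h : ∃! t : ↥(Iio (a₀ b)) → κ.ord.ToType, y ∈ V (a₀ b) t then h.choose ⟨b, ha₀lt b⟩
    else y b with hxcdef
  have hxc_eq : ∀ (y : GenBaire κ) (hy : y ∈ G₀) (b : κ.ord.ToType),
      xc y b = (hy (a₀ b)).choose ⟨b, ha₀lt b⟩ := by
    intro y hy b
    show (if h : ∃! t : ↥(Iio (a₀ b)) → κ.ord.ToType, y ∈ V (a₀ b) t then
      h.choose ⟨b, ha₀lt b⟩ else y b) = _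
    rw [dif_pos (hy (a₀ b))]
  -- Borelness of the basic conditions on xc
  have hM1 : ∀ b v : κ.ord.ToType, KBorel κ {y | y ∈ G₀ ∧ xc y b = v} := by
    intro b v
    have hEq : {y | y ∈ G₀ ∧ xc y b = v} = G₀ ∩
        ⋃ t : {t : ↥(Iio (a₀ b)) → κ.ord.ToType // t ⟨b, ha₀lt b⟩ = v}, V (a₀ b) t.1 := by
      ext y
      simp only [Set.mem_setOf_eq, Set.mem_inter_iff, Set.mem_iUnion]
      constructor
      · rintro ⟨hy, hxv⟩
        refine ⟨hy, ⟨(hy (a₀ b)).choose, ?_⟩, (hy (a₀ b)).choose_spec.1⟩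
        rw [← hxv, hxc_eq y hy b]
      · rintro ⟨hy, ⟨t, htv⟩, htV⟩
        refine ⟨hy, ?_⟩
        rw [hxc_eq y hy b]
        have h8 : t = (hy (a₀ b)).choose := (hy (a₀ b)).choose_spec.2 t htV
        rw [← h8, htv]
    rw [hEq]
    exact kb_inter hunc hG₀b
      (kb_iUnion ((Cardinal.mk_subtype_le _).trans (hfun_le (a₀ b))) fun t => hVb _ _)
  have hM2 : ∀ (a : κ.ord.ToType) (t : ↥(Iio a) → κ.ord.ToType),
      KBorel κ {y | y ∈ G₀ ∧ xc y ∈ Nseg κ a t} := by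
    intro a t
    have hEq : {y | y ∈ G₀ ∧ xc y ∈ Nseg κ a t} =
        G₀ ∩ ⋂ b : ↥(Iio a), {y | y ∈ G₀ ∧ xc y b.1 = t b} := by
      ext y
      simp only [Set.mem_setOf_eq, Set.mem_inter_iff, Set.mem_iInter]
      constructor
      · rintro ⟨hy, hN⟩
        exact ⟨hy, fun b => ⟨hy, hN b.1 b.2⟩⟩
      · rintro ⟨hy, hb⟩
        exact ⟨hy, fun b hlt => (hb ⟨b, hlt⟩).2⟩
    rw [hEq]
    exact kb_inter hunc hG₀b
      (kb_iInter (Cardinal.mk_Iio_ord_toType a).le fun b => hM1 b.1 (t b))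
  have hM3 : ∀ S : Set (GenBaire κ), KBorel κ S → KBorel κ {y | y ∈ G₀ ∧ xc y ∈ S} := by
    intro S hS
    induction hS with
    | of_isOpen Uo hUo =>
      have hEq : {y | y ∈ G₀ ∧ xc y ∈ Uo} =
          ⋃ q : {p : Sg κ // Nseg κ p.1 p.2 ⊆ Uo}, {y | y ∈ G₀ ∧ xc y ∈ Nseg κ q.1.1 q.1.2} := by
        ext y
        simp only [Set.mem_setOf_eq, Set.mem_iUnion]
        constructor
        · rintro ⟨hy, hxU⟩
          obtain ⟨p, hp1, hp2⟩ := basisP hκ0 hUo (xc y) hxU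
          exact ⟨⟨p, hp2⟩, hy, hp1⟩
        · rintro ⟨q, hy, hq⟩
          exact ⟨hy, q.2 hq⟩
      rw [hEq]
      exact kb_iUnion ((Cardinal.mk_subtype_le _).trans (mk_Sg_le hreg hunc hpow))
        fun q => hM2 q.1.1 q.1.2
    | compl S hS ih =>
      have hEq : {y | y ∈ G₀ ∧ xc y ∈ Sᶜ} = G₀ ∩ {y | y ∈ G₀ ∧ xc y ∈ S}ᶜ := by
        ext y
        simp only [Set.mem_setOf_eq, Set.mem_inter_iff, Set.mem_compl_iff]
        constructor
        · rintro ⟨hy, hxS⟩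
          exact ⟨hy, fun h => hxS h.2⟩
        · rintro ⟨hy, hn⟩
          exact ⟨hy, fun h => hn ⟨hy, h⟩⟩
      rw [hEq]
      exact kb_inter hunc hG₀b (KBorel.compl _ ih)
    | iUnion ι' f hι hf ih =>
      have hEq : {y | y ∈ G₀ ∧ xc y ∈ ⋃ i, f i} = ⋃ i, {y | y ∈ G₀ ∧ xc y ∈ f i} := by
        ext y
        simp only [Set.mem_setOf_eq, Set.mem_iUnion]
        tauto
      rw [hEq]
      exact kb_iUnion hι ih
  -- the Borel description of the range of H
  set Gset : Set (GenBaire κ) :=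
    {y | y ∈ G₀ ∧ xc y ∈ B₁ ∧ ∀ a, xc y ∈ U a (fun b => y b.1)} with hGsetdef
  have hGb : KBorel κ Gset := by
    have hGEq : Gset = {y | y ∈ G₀ ∧ xc y ∈ B₁} ∩
        ⋂ a, ⋃ t : ↥(Iio a) → κ.ord.ToType,
          (Nseg κ a t ∩ {y | y ∈ G₀ ∧ xc y ∈ U a t}) := by
      ext y
      simp only [hGsetdef, Set.mem_setOf_eq, Set.mem_inter_iff, Set.mem_iInter, Set.mem_iUnion]
      constructor
      · rintro ⟨hy, hB, hU'⟩
        exact ⟨⟨hy, hB⟩, fun a => ⟨fun b => y b.1, fun b h => rfl, hy, hU' a⟩⟩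
      · rintro ⟨⟨hy, hB⟩, h⟩
        refine ⟨hy, hB, fun a => ?_⟩
        obtain ⟨t, hN, hy2, hU2⟩ := h a
        have ht : t = fun b => y b.1 := by
          funext b
          exact (hN b.1 b.2).symm
        rw [← ht]
        exact hU2
    rw [hGEq]
    exact kb_inter hunc (hM3 B₁ hB₁)
      (kb_iInter (mk_ordToType κ).le fun a => kb_iUnion (hfun_le a) fun t =>
        kb_inter hunc (kb_Nseg a t) (hM3 _ (hUb a t)))
  -- the key identity: the range of H is Gset
  have hDG : Set.range H = Gset := by
    apply Set.eq_of_subset_of_subset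
    · rintro y ⟨x, rfl⟩
      have hyG₀ : H x ∈ G₀ := by
        intro a
        refine ⟨fun b => x.1 b.1, ?_, ?_⟩
        · exact ((hVy a _ (H x)).2 ⟨x, fun b h => rfl, rfl⟩).1
        · intro t' ht'
          obtain ⟨x', hx'N, hx'H⟩ := (hVy a t' (H x)).1 ⟨ht', ⟨x, rfl⟩⟩
          have hxx : x' = x := hHinj hx'H
          funext b
          rw [← hxx]
          exact (hx'N b.1 b.2).symm
      have hxc : xc (H x) = x.1 := by
        funext b
        rw [hxc_eq (H x) hyG₀ b]
        have hPt : H x ∈ V (a₀ b) (fun b' : ↥(Iio (a₀ b)) => x.1 b'.1) :=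
          ((hVy (a₀ b) _ (H x)).2 ⟨x, fun b' h => rfl, rfl⟩).1
        have h7 := (hyG₀ (a₀ b)).choose_spec.2 _ hPt
        rw [← h7]
      refine ⟨hyG₀, ?_, ?_⟩
      · rw [hxc]
        exact x.2
      · intro a
        rw [hxc]
        exact (hUx a (fun b => (H x) b.1) x).1 (fun b h => rfl)
    · rintro y ⟨hyG₀, hyB₁, hyU⟩
      refine ⟨⟨xc y, hyB₁⟩, ?_⟩
      funext b
      have h8 := (hUx (a₀ b) (fun b' => y b'.1) ⟨xc y, hyB₁⟩).2 (hyU (a₀ b))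
      exact h8 b (ha₀lt b)
  -- conclude
  have hRb : KBorel κ (Set.range H) := by
    rw [hDG]
    exact hGb
  have h1 : (Subtype.val ⁻¹' (Set.range H) : Set ↥B₀) ∈
      RestrictFam (KBorelFam κ (GenBaire κ)) B₀ := ⟨_, hRb, rfl⟩
  have h2 := he.2 _ h1
  have h3 : e ⁻¹' (Subtype.val ⁻¹' (Set.range H)) = A := by
    ext z
    show (e z).1 ∈ Set.range H ↔ z ∈ A
    constructor
    · rintro ⟨x, hx⟩
      have h4 : ((e₁.symm x : ↥A) : X) = z := e.injective (Subtype.ext hx)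
      rw [← h4]
      exact (e₁.symm x).2
    · intro hz
      refine ⟨e₁ ⟨z, hz⟩, ?_⟩
      show (e ((e₁.symm (e₁ ⟨z, hz⟩) : ↥A) : X)).1 = (e z).1
      rw [Equiv.symm_apply_apply]
  rwa [h3] at h2

end Stmt19Hard
/-- a subset of a standard κ-Borel space is standard with the restricted
structure iff it is a distinguished set. -/
theorem stmt_19 (κ : Cardinal.{u}) (hreg : κ.IsRegular) (hunc : ℵ₀ < κ)
    (hpow : (2 : Cardinal.{u}) ^< κ = κ)
    (X : Type u) (ℬ : Set (Set X)) (hstd : IsStandardKBorel κ ℬ) (A : Set X) :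
    IsStandardKBorel κ (RestrictFam ℬ A) ↔ A ∈ ℬ := by
  constructor
  · intro hsub
    exact stmt19_hard hreg hunc hpow hstd hsub
  · intro hA
    exact stmt19_easy hunc hstd hA


end GDST
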